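/- (Scaling in E_{2,1}^s) Let s < 0 and f ∈ E_{2,1}^s(ℝ^d) with supp f̂ ⊂ {ξ ∈ ℝ_I^d : |ξ|_∞ ≥ 1}. Write f_λ(x) = f(λx). Then there exists C depending only on s and d such that for all λ ≥ 2, ‖f_λ‖_{E_{2,1}^s} ≤ C 2^{s(λ−1)} ‖f‖_{E_{2,1}^s}. -/

import Mathlib

open MeasureTheory FourierTransform ENNReal

noncomputable section

abbrev Vd (d : ℕ) := EuclideanSpace ℝ (Fin d)

def cube (d : ℕ) (k : Fin d → ℤ) : Set (Vd d) :=
  {ξ | ∀ i, (k i : ℝ) ≤ ξ i ∧ ξ i < k i + 1}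

def l1Z {d : ℕ} (k : Fin d → ℤ) : ℝ := ∑ i, |(k i : ℝ)|

/-- The E_{2,1}^s norm: Σ_{k∈ℤ^d} 2^{s|k|} ‖f̂‖_{L²(k+[0,1)^d)}. -/
def E21norm (d : ℕ) (s : ℝ) (f : Vd d → ℂ) : ℝ≥0∞ :=
  ∑' k : Fin d → ℤ, ENNReal.ofReal ((2:ℝ) ^ (s * l1Z k)) *
    eLpNorm (𝓕 f) 2 (volume.restrict (cube d k))

open Set RealInnerProductSpace

/-! ### Auxiliary lemmas -/

lemma sq_half (x : ℝ≥0∞) : x ^ (2⁻¹:ℝ) * x ^ (2⁻¹:ℝ) = x := by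
  rw [← ENNReal.rpow_add_of_nonneg _ _ (by norm_num) (by norm_num)]; norm_num

lemma sqrt_sq (x : ℝ≥0∞) : (x * x) ^ (2⁻¹:ℝ) = x := by
  rw [ENNReal.mul_rpow_of_nonneg _ _ (by norm_num : (0:ℝ) ≤ 2⁻¹), sq_half]

lemma sqrt_tsum_le {ι : Type*} (a : ι → ℝ≥0∞) :
    (∑' i, a i) ^ (2⁻¹:ℝ) ≤ ∑' i, (a i) ^ (2⁻¹:ℝ) := by
  set S := ∑' i, (a i) ^ (2⁻¹:ℝ) with hS
  have h1 : ∑' i, a i ≤ S * S := by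
    have h : ∀ i, a i ≤ (a i) ^ (2⁻¹:ℝ) * S := fun i => by
      conv_lhs => rw [← sq_half (a i)]
      exact mul_le_mul_right (ENNReal.le_tsum i) _
    calc ∑' i, a i ≤ ∑' i, (a i) ^ (2⁻¹:ℝ) * S := ENNReal.tsum_le_tsum h
      _ = S * S := by rw [ENNReal.tsum_mul_right]
  calc (∑' i, a i) ^ (2⁻¹:ℝ) ≤ (S * S) ^ (2⁻¹:ℝ) :=
        ENNReal.rpow_le_rpow h1 (by norm_num)
    _ = S := sqrt_sq S

lemma sum_sqrt_le {ι : Type*} (K : Finset ι) (b : ι → ℝ≥0∞) :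
    ∑ i ∈ K, (b i) ^ (2⁻¹:ℝ) ≤ ((2 * K.card : ℝ≥0∞) * ∑ i ∈ K, b i) ^ (2⁻¹:ℝ) := by
  set c : ι → ℝ≥0∞ := fun i => (b i) ^ (2⁻¹:ℝ) with hc
  have key : (∑ i ∈ K, c i) * (∑ i ∈ K, c i) ≤ (2 * K.card : ℝ≥0∞) * ∑ i ∈ K, b i := by
    rw [Finset.sum_mul_sum]
    have hterm : ∀ i ∈ K, ∀ j ∈ K, c i * c j ≤ b i + b j := by
      intro i _ j _
      rcases le_total (c i) (c j) with h | h
      · calc c i * c j ≤ c j * c j := mul_le_mul_left h _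
          _ = b j := sq_half _
          _ ≤ b i + b j := le_add_self
      · calc c i * c j ≤ c i * c i := mul_le_mul_right h _
          _ = b i := sq_half _
          _ ≤ b i + b j := self_le_add_right _ _
    calc ∑ i ∈ K, ∑ j ∈ K, c i * c j
        ≤ ∑ i ∈ K, ∑ j ∈ K, (b i + b j) :=
          Finset.sum_le_sum (fun i hi => Finset.sum_le_sum (fun j hj => hterm i hi j hj))
      _ = ∑ i ∈ K, ((K.card : ℝ≥0∞) * b i + ∑ j ∈ K, b j) := by
          refine Finset.sum_congr rfl fun i _ => ?_
          rw [Finset.sum_add_distrib, Finset.sum_const, nsmul_eq_mul]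
      _ = (K.card : ℝ≥0∞) * ∑ i ∈ K, b i + (K.card : ℝ≥0∞) * ∑ i ∈ K, b i := by
          rw [Finset.sum_add_distrib, ← Finset.mul_sum, Finset.sum_const, nsmul_eq_mul]
      _ = (2 * K.card : ℝ≥0∞) * ∑ i ∈ K, b i := by ring
  calc ∑ i ∈ K, c i = ((∑ i ∈ K, c i) * (∑ i ∈ K, c i)) ^ (2⁻¹:ℝ) := (sqrt_sq _).symm
    _ ≤ _ := ENNReal.rpow_le_rpow key (by norm_num)

lemma fourier_comp_smul {d : ℕ} (f : Vd d → ℂ) (lam : ℝ) (hlam : 0 < lam) (ξ : Vd d) :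
    𝓕 (fun x => f (lam • x)) ξ = ((lam ^ d : ℝ)⁻¹) • 𝓕 f (lam⁻¹ • ξ) := by
  rw [Real.fourier_eq, Real.fourier_eq]
  have h : ∀ v : Vd d, 𝐞 (-⟪v, ξ⟫) • f (lam • v)
      = (fun y => 𝐞 (-⟪y, lam⁻¹ • ξ⟫) • f y) (lam • v) := by
    intro v
    simp only
    congr 2
    rw [real_inner_smul_left, real_inner_smul_right, ← mul_assoc,
      mul_inv_cancel₀ hlam.ne', one_mul]
  simp_rw [h]
  rw [MeasureTheory.Measure.integral_comp_smul volume (fun y => 𝐞 (-⟪y, lam⁻¹ • ξ⟫) • f y) lam]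
  rw [finrank_euclideanSpace, Fintype.card_fin]
  rw [abs_of_nonneg (by positivity)]

lemma lintegral_comp_smul_vd {d : ℕ} (H : Vd d → ℝ≥0∞) (c : ℝ) (hc : c ≠ 0) :
    ∫⁻ ξ, H (c • ξ) = ENNReal.ofReal |(c ^ d)⁻¹| * ∫⁻ ξ, H ξ := by
  have h0 : ∀ ξ : Vd d, H (c • ξ) = H ((MeasurableEquiv.smul₀ c hc) ξ) := fun ξ => by congr 1
  simp_rw [h0]
  rw [← MeasureTheory.lintegral_map_equiv H (MeasurableEquiv.smul₀ c hc)]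
  have h2 : Measure.map (⇑(MeasurableEquiv.smul₀ c hc)) (volume : Measure (Vd d))
      = Measure.map (c • ·) volume := rfl
  rw [h2, MeasureTheory.Measure.map_addHaar_smul volume hc, lintegral_smul_measure,
    finrank_euclideanSpace, Fintype.card_fin, smul_eq_mul]

lemma cube_measurable (d : ℕ) (k : Fin d → ℤ) : MeasurableSet (cube d k) := by
  have : cube d k = ⋂ i, (fun ξ : Vd d => ξ i) ⁻¹' (Set.Ico (k i : ℝ) (k i + 1)) := by
    ext ξ; simp [cube, Set.mem_iInter, Set.mem_Ico]
  rw [this]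
  exact MeasurableSet.iInter fun i => ((measurable_pi_apply i).comp (WithLp.measurable_ofLp _ _)) measurableSet_Ico

lemma cube_disjoint (d : ℕ) : Pairwise (Function.onFun Disjoint (cube d)) := by
  intro k k' hkk'
  rw [Function.onFun, Set.disjoint_left]
  intro ξ hk hk'
  apply hkk'
  funext i
  have h1 := hk i; have h2 := hk' i
  have : (k i : ℝ) = k' i := by
    have a1 : k i ≤ k' i := by
      have : (k i : ℝ) < k' i + 1 := lt_of_le_of_lt h1.1 h2.2
      exact_mod_cast Int.lt_add_one_iff.1 (by exact_mod_cast this)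
    have a2 : k' i ≤ k i := by
      have : (k' i : ℝ) < k i + 1 := lt_of_le_of_lt h2.1 h1.2
      exact_mod_cast Int.lt_add_one_iff.1 (by exact_mod_cast this)
    exact_mod_cast le_antisymm a1 a2
  exact_mod_cast this

lemma cube_cover (d : ℕ) : ⋃ l, cube d l = (univ : Set (Vd d)) := by
  ext ξ
  simp only [Set.mem_iUnion, Set.mem_univ, iff_true]
  exact ⟨fun i => ⌊ξ i⌋, fun i => ⟨Int.floor_le _, by push_cast; exact Int.lt_floor_add_one _⟩⟩

lemma eLpNorm_two_eq {d : ℕ} (h : Vd d → ℂ) (A : Set (Vd d)) :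
    eLpNorm h 2 (volume.restrict A)
      = (∫⁻ ξ in A, (‖h ξ‖₊ : ℝ≥0∞) ^ (2:ℝ)) ^ (2⁻¹:ℝ) := by
  rw [eLpNorm_eq_lintegral_rpow_enorm_toReal two_ne_zero (by norm_num : (2:ℝ≥0∞) ≠ ⊤)]
  norm_num [enorm_eq_nnnorm]

/-- scaling in E_{2,1}^s. For s < 0 there is C = C(s,d) such that
for all f with supp f̂ ⊂ {ξ ∈ ℝ_I^d : |ξ|_∞ ≥ 1} and all λ ≥ 2,
‖f(λ·)‖_{E_{2,1}^s} ≤ C 2^{s(λ−1)} ‖f‖_{E_{2,1}^s}. -/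
theorem stmt18 (d : ℕ) (hd : 1 ≤ d) (s : ℝ) (hs : s < 0) :
    ∃ C : ℝ, 0 < C ∧ ∀ f : Vd d → ℂ,
      Function.support (𝓕 f) ⊆ {ξ : Vd d | (∀ i, 0 ≤ ξ i) ∧ ∃ i, 1 ≤ ξ i} →
      ∀ lam : ℝ, 2 ≤ lam →
        E21norm d s (fun x => f (lam • x)) ≤
          ENNReal.ofReal (C * (2:ℝ) ^ (s * (lam - 1))) * E21norm d s f := by
  classical
  refine ⟨(2 * 3^d : ℝ) ^ (2⁻¹:ℝ) * (2:ℝ) ^ (-s), by positivity, ?_⟩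
  intro f hsupp lam hlam
  have hlam0 : (0:ℝ) < lam := lt_of_lt_of_le (by norm_num) hlam
  set S : Set (Vd d) := {ξ : Vd d | (∀ i, 0 ≤ ξ i) ∧ ∃ i, 1 ≤ ξ i} with hSdef
  have hSm : MeasurableSet S := by
    have hset : S = (⋂ i, (fun ξ : Vd d => ξ i) ⁻¹' (Set.Ici (0:ℝ)))
        ∩ ⋃ i, (fun ξ : Vd d => ξ i) ⁻¹' (Set.Ici (1:ℝ)) := by
      ext ξ; simp [hSdef]
    rw [hset]
    exact ((MeasurableSet.iInter fun i => ((measurable_pi_apply i).comp (WithLp.measurable_ofLp _ _)) measurableSet_Ici)).inter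
      (MeasurableSet.iUnion fun i => ((measurable_pi_apply i).comp (WithLp.measurable_ofLp _ _)) measurableSet_Ici)
  set F2 : Vd d → ℝ≥0∞ := fun ξ => (‖𝓕 f ξ‖₊ : ℝ≥0∞) ^ (2:ℝ) with hF2
  set L : Set (Vd d) → ℝ≥0∞ := fun A => ∫⁻ ξ in A, F2 ξ with hL
  have hF2supp : Function.support F2 ⊆ S := by
    intro ξ hξ
    by_contra hxS
    have hz : 𝓕 f ξ = 0 := by
      by_contra h; exact hxS (hsupp h)
    apply hξ
    simp [hF2, hz, ENNReal.zero_rpow_of_pos (by norm_num : (0:ℝ) < 2)]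
  set Q : (Fin d → ℤ) → Set (Vd d) := fun k => (fun ξ : Vd d => lam • ξ) ⁻¹' cube d k with hQdef
  have hQm : ∀ k, MeasurableSet (Q k) := fun k =>
    (measurable_const_smul lam) (cube_measurable d k)
  have hQdis : Pairwise (Function.onFun Disjoint Q) := fun k k' h =>
    Disjoint.preimage _ (cube_disjoint d h)
  have hQtotal : ∀ ξ : Vd d, ∃ k, ξ ∈ Q k := by
    intro ξ
    have : lam • ξ ∈ ⋃ l, cube d l := by rw [cube_cover]; trivial
    obtain ⟨k, hk⟩ := Set.mem_iUnion.1 this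
    exact ⟨k, hk⟩
  have hcubetotal : ∀ ξ : Vd d, ∃ l, ξ ∈ cube d l := by
    intro ξ
    have : ξ ∈ ⋃ l, cube d l := by rw [cube_cover]; trivial
    exact Set.mem_iUnion.1 this
  set T : (Fin d → ℤ) → (Fin d → ℤ) → Set (Vd d) :=
    fun k l => (S ∩ Q k) ∩ cube d l with hTdef
  have hTm : ∀ k l, MeasurableSet (T k l) := fun k l =>
    ((hSm.inter (hQm k)).inter (cube_measurable d l))
  -- weights and constants
  set w : (Fin d → ℤ) → ℝ≥0∞ := fun k => ENNReal.ofReal ((2:ℝ) ^ (s * l1Z k)) with hw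
  set A : ℝ≥0∞ := ENNReal.ofReal ((lam ^ d)⁻¹) ^ (2⁻¹:ℝ) with hA
  set B : ℝ≥0∞ := ENNReal.ofReal ((2:ℝ) ^ (s * (lam - 2))) with hB
  set D : ℝ≥0∞ := ENNReal.ofReal (2 * (3*lam)^d) ^ (2⁻¹:ℝ) with hD
  -- Step 1 : eLpNorm of the dilated function
  have hkey : ∀ k, eLpNorm (𝓕 fun x => f (lam • x)) 2 (volume.restrict (cube d k))
      = A * (L (Q k)) ^ (2⁻¹:ℝ) := by
    intro k
    rw [eLpNorm_two_eq]
    have h1 : ∀ ξ : Vd d, (‖(𝓕 fun x => f (lam • x)) ξ‖₊ : ℝ≥0∞) ^ (2:ℝ)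
        = ENNReal.ofReal ((lam^d)⁻¹) ^ (2:ℝ) * F2 (lam⁻¹ • ξ) := by
      intro ξ
      rw [fourier_comp_smul f lam hlam0 ξ, nnnorm_smul, ENNReal.coe_mul,
        ENNReal.mul_rpow_of_nonneg _ _ (by norm_num : (0:ℝ) ≤ 2)]
      congr 2
      rw [← enorm_eq_nnnorm, Real.enorm_eq_ofReal_abs, abs_of_nonneg (by positivity)]
    simp_rw [h1]
    rw [lintegral_const_mul' _ _
      (ENNReal.rpow_ne_top_of_nonneg (by norm_num) ENNReal.ofReal_ne_top)]
    have h2 : ∫⁻ ξ in cube d k, F2 (lam⁻¹ • ξ) = ENNReal.ofReal (lam ^ d) * L (Q k) := by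
      have hxy : ∀ ξ : Vd d, (lam⁻¹ • ξ ∈ Q k) ↔ ξ ∈ cube d k := by
        intro ξ
        simp only [hQdef, Set.mem_preimage, smul_inv_smul₀ hlam0.ne']
      have hind : ∀ ξ : Vd d, (cube d k).indicator (fun η => F2 (lam⁻¹ • η)) ξ
          = ((Q k).indicator F2) (lam⁻¹ • ξ) := by
        intro ξ
        simp only [Set.indicator_apply]
        exact (if_congr (hxy ξ).symm rfl rfl)
      rw [← lintegral_indicator (cube_measurable d k)]
      simp_rw [hind]
      rw [lintegral_comp_smul_vd ((Q k).indicator F2) lam⁻¹ (inv_ne_zero hlam0.ne')]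
      rw [lintegral_indicator (hQm k)]
      congr 2
      rw [inv_pow, inv_inv, abs_of_nonneg (by positivity)]
    rw [h2]
    have h3 : ENNReal.ofReal ((lam^d)⁻¹) ^ (2:ℝ) * (ENNReal.ofReal (lam ^ d) * L (Q k))
        = ENNReal.ofReal ((lam^d)⁻¹) * L (Q k) := by
      rw [← mul_assoc]
      congr 1
      rw [ENNReal.ofReal_rpow_of_pos (by positivity), ← ENNReal.ofReal_mul (by positivity)]
      congr 1
      have hx : ((lam^d)⁻¹ : ℝ) ^ (2:ℝ) = ((lam^d)⁻¹) ^ (2:ℕ) := by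
        rw [← Real.rpow_natCast]; norm_num
      rw [hx]
      have : (lam ^ d) ≠ 0 := by positivity
      field_simp
    rw [h3, ENNReal.mul_rpow_of_nonneg _ _ (by norm_num : (0:ℝ) ≤ 2⁻¹), ← hA]
  -- Step 2 : partition of L (Q k)
  have hQL : ∀ k, L (Q k) = ∑' l, L (T k l) := by
    intro k
    have e1 : L (Q k) = ∫⁻ ξ in Q k, S.indicator F2 ξ := by
      rw [Set.indicator_eq_self.2 hF2supp]
    have e2 : ∫⁻ ξ in Q k, S.indicator F2 ξ = L (S ∩ Q k) := by
      rw [lintegral_indicator hSm, Measure.restrict_restrict hSm]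
    have e3 : S ∩ Q k = ⋃ l, T k l := by
      ext ξ
      simp only [hTdef, Set.mem_iUnion, Set.mem_inter_iff]
      constructor
      · rintro ⟨h1, h2⟩
        obtain ⟨l, hl⟩ := hcubetotal ξ
        exact ⟨l, ⟨h1, h2⟩, hl⟩
      · rintro ⟨l, ⟨h1, h2⟩, _⟩
        exact ⟨h1, h2⟩
    rw [e1, e2, e3]
    exact lintegral_iUnion (fun l => hTm k l)
      (fun l l' h => Set.disjoint_of_subset Set.inter_subset_right Set.inter_subset_right
        (cube_disjoint d h)) _
  -- Step 2' : sum over k for fixed l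
  have hlT : ∀ l, ∑' k, L (T k l) ≤ L (cube d l) := by
    intro l
    have e3 : ⋃ k, T k l = (S ∩ cube d l) := by
      ext ξ
      simp only [hTdef, Set.mem_iUnion, Set.mem_inter_iff]
      constructor
      · rintro ⟨k, ⟨⟨h1, _⟩, h2⟩⟩; exact ⟨h1, h2⟩
      · rintro ⟨h1, h2⟩
        obtain ⟨k, hk⟩ := hQtotal ξ
        exact ⟨k, ⟨⟨h1, hk⟩, h2⟩⟩
    have : ∑' k, L (T k l) = L (S ∩ cube d l) := by
      rw [← e3]
      exact (lintegral_iUnion (fun k => hTm k l)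
        (fun k k' h => Set.disjoint_of_subset
          (Set.inter_subset_left.trans Set.inter_subset_right)
          (Set.inter_subset_left.trans Set.inter_subset_right)
          (hQdis h)) _).symm
    rw [this]
    exact lintegral_mono' (Measure.restrict_mono Set.inter_subset_right le_rfl) le_rfl
  -- Step 3 : weight comparison
  have hwle : ∀ k l, (T k l).Nonempty → w k ≤ B * w l := by
    intro k l ⟨ξ, ⟨⟨hξS, hξQ⟩, hξl⟩⟩
    obtain ⟨hpos, i0, hi0⟩ := hξS
    have hQc : ∀ i, (k i : ℝ) ≤ lam * ξ i ∧ lam * ξ i < k i + 1 := by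
      intro i
      have := hξQ
      simp only [hQdef, Set.mem_preimage, cube, Set.mem_setOf_eq] at this
      have h := this i
      simpa using h
    have hlc : ∀ i, (l i : ℝ) ≤ ξ i ∧ ξ i < l i + 1 := hξl
    have hl0 : ∀ i, (0:ℤ) ≤ l i := by
      intro i
      have h1 : (-1 : ℝ) < (l i : ℝ) := by
        have := (hlc i).2; have := hpos i; linarith
      have h2 : (-1 : ℤ) < l i := by exact_mod_cast h1
      omega
    have hk_ge : ∀ i, (l i : ℝ) ≤ k i := by
      intro i
      have h1 : (l i : ℝ) < k i + 1 := by
        have hξi := (hlc i).1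
        have hki := (hQc i).2
        have hli : (0:ℝ) ≤ l i := by exact_mod_cast hl0 i
        nlinarith
      have : l i < k i + 1 := by exact_mod_cast h1
      exact_mod_cast Int.lt_add_one_iff.1 this
    have hmain : l1Z l + (lam - 2) ≤ l1Z k := by
      have habs_k : l1Z k = ∑ i, (k i : ℝ) := by
        refine Finset.sum_congr rfl fun i _ => abs_of_nonneg ?_
        exact le_trans (by exact_mod_cast hl0 i) (hk_ge i)
      have habs_l : l1Z l = ∑ i, (l i : ℝ) := by
        refine Finset.sum_congr rfl fun i _ => abs_of_nonneg ?_
        exact_mod_cast hl0 i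
      have hstar : (l i0 : ℝ) + (lam - 2) ≤ k i0 := by
        have h1 := (hQc i0).2
        have h2 := (hlc i0).1
        nlinarith [(hQc i0).1]
      have hsum : ∑ i, ((k i : ℝ) - l i) ≥ (k i0 : ℝ) - l i0 := by
        refine Finset.single_le_sum (f := fun i => (k i : ℝ) - l i) ?_ (Finset.mem_univ i0)
        intro i _
        show (0:ℝ) ≤ (k i : ℝ) - l i
        linarith [hk_ge i]
      rw [habs_k, habs_l]
      have : ∑ i, ((k i : ℝ) - l i) = ∑ i, (k i : ℝ) - ∑ i, (l i : ℝ) := by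
        rw [Finset.sum_sub_distrib]
      linarith [hsum, this.symm.le]
    -- conclude on weights
    rw [hw, hB]
    rw [← ENNReal.ofReal_mul (by positivity)]
    apply ENNReal.ofReal_le_ofReal
    rw [← Real.rpow_add (by norm_num : (0:ℝ) < 2)]
    apply Real.rpow_le_rpow_of_exponent_le (by norm_num)
    have : s * l1Z k ≤ s * (l1Z l + (lam - 2)) := by
      apply mul_le_mul_of_nonpos_left hmain hs.le
    linarith [this]
  -- Step 4 : number of k's hitting a given cube l
  have hKl : ∀ l : Fin d → ℤ, ∑' k, (L (T k l)) ^ (2⁻¹:ℝ) ≤ D * (L (cube d l)) ^ (2⁻¹:ℝ) := by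
    intro l
    set K : Finset (Fin d → ℤ) :=
      Fintype.piFinset fun i => Finset.Icc (⌈lam * (l i : ℝ)⌉ - 1) (⌈lam * (l i : ℝ)⌉ + ⌈lam⌉)
      with hK
    have hvan : ∀ k ∉ K, T k l = ∅ := by
      intro k hk
      rw [Set.eq_empty_iff_forall_notMem]
      intro ξ hξ
      apply hk
      obtain ⟨⟨hξS, hξQ⟩, hξl⟩ := hξ
      have hQc : ∀ i, (k i : ℝ) ≤ lam * ξ i ∧ lam * ξ i < k i + 1 := by
        intro i
        have := hξQ
        simp only [hQdef, Set.mem_preimage, cube, Set.mem_setOf_eq] at this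
        simpa using this i
      rw [hK, Fintype.mem_piFinset]
      intro i
      rw [Finset.mem_Icc]
      constructor
      · -- lower bound
        have h1 : lam * (l i : ℝ) ≤ k i + 1 := by
          have := (hQc i).2
          have := (hξl i).1
          nlinarith
        have : ⌈lam * (l i : ℝ)⌉ ≤ k i + 1 := Int.ceil_le.2 (by exact_mod_cast h1)
        omega
      · -- upper bound
        have h1 : (k i : ℝ) < lam * (l i : ℝ) + lam := by
          have := (hQc i).1
          have := (hξl i).2
          nlinarith
        have h2 : (k i : ℝ) < (⌈lam * (l i : ℝ)⌉ : ℝ) + ⌈lam⌉ := by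
          have := Int.le_ceil (lam * (l i : ℝ))
          have := Int.le_ceil lam
          linarith
        have : k i < ⌈lam * (l i : ℝ)⌉ + ⌈lam⌉ := by exact_mod_cast h2
        omega
    have hvan' : ∀ k ∉ K, (L (T k l)) ^ (2⁻¹:ℝ) = 0 := by
      intro k hk
      rw [hvan k hk]
      simp [hL, ENNReal.zero_rpow_of_pos (by norm_num : (0:ℝ) < 2⁻¹)]
    rw [tsum_eq_sum hvan']
    calc ∑ k ∈ K, (L (T k l)) ^ (2⁻¹:ℝ)
        ≤ ((2 * K.card : ℝ≥0∞) * ∑ k ∈ K, L (T k l)) ^ (2⁻¹:ℝ) := sum_sqrt_le K _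
      _ ≤ (ENNReal.ofReal (2 * (3*lam)^d) * L (cube d l)) ^ (2⁻¹:ℝ) := by
          apply ENNReal.rpow_le_rpow _ (by norm_num)
          apply mul_le_mul'
          · -- card bound
            have hcard : K.card = ((⌈lam⌉ + 2).toNat) ^ d := by
              rw [hK, Fintype.card_piFinset]
              have : ∀ i : Fin d, (Finset.Icc (⌈lam * (l i : ℝ)⌉ - 1) (⌈lam * (l i : ℝ)⌉ + ⌈lam⌉)).card
                  = (⌈lam⌉ + 2).toNat := by
                intro i
                rw [Int.card_Icc]
                congr 1
                ring
              simp only [this, Finset.prod_const, Finset.card_univ, Fintype.card_fin]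
            have hceil : ((⌈lam⌉ + 2).toNat : ℝ) ≤ 3 * lam := by
              have h1 : (⌈lam⌉ : ℝ) < lam + 1 := Int.ceil_lt_add_one lam
              have h2 : (0:ℤ) ≤ ⌈lam⌉ + 2 := by
                have : (0:ℤ) ≤ ⌈lam⌉ := Int.ceil_nonneg (by linarith)
                omega
              have h3 : (((⌈lam⌉ + 2).toNat : ℤ) : ℝ) = ((⌈lam⌉ : ℝ) + 2) := by
                rw [Int.toNat_of_nonneg h2]; push_cast; ring
              have h4 : ((⌈lam⌉ + 2).toNat : ℝ) = ((⌈lam⌉ : ℝ) + 2) := by exact_mod_cast h3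
              rw [h4]
              linarith
            calc (2 * K.card : ℝ≥0∞) = ENNReal.ofReal (2 * K.card) := by
                  rw [ENNReal.ofReal_mul (by norm_num)]
                  simp [ENNReal.ofReal_natCast, ENNReal.ofReal_ofNat]
              _ ≤ ENNReal.ofReal (2 * (3*lam)^d) := by
                  apply ENNReal.ofReal_le_ofReal
                  have : (K.card : ℝ) ≤ (3*lam)^d := by
                    rw [hcard]
                    push_cast
                    exact pow_le_pow_left₀ (by positivity) hceil d
                  nlinarith
          · calc ∑ k ∈ K, L (T k l) ≤ ∑' k, L (T k l) := ENNReal.sum_le_tsum K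
              _ ≤ L (cube d l) := hlT l
      _ = D * (L (cube d l)) ^ (2⁻¹:ℝ) := by
          rw [ENNReal.mul_rpow_of_nonneg _ _ (by norm_num : (0:ℝ) ≤ 2⁻¹), hD]
  -- Step 5 : main chain
  have main : E21norm d s (fun x => f (lam • x)) ≤ (A * B * D) * E21norm d s f := by
    have e0 : E21norm d s (fun x => f (lam • x)) = ∑' k, w k * (A * (L (Q k)) ^ (2⁻¹:ℝ)) := by
      rw [E21norm]
      exact tsum_congr fun k => by rw [hkey k]
    rw [e0]
    have step1 : ∑' k, w k * (A * (L (Q k)) ^ (2⁻¹:ℝ))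
        ≤ A * ∑' k, ∑' l, w k * (L (T k l)) ^ (2⁻¹:ℝ) := by
      rw [← ENNReal.tsum_mul_left]
      apply ENNReal.tsum_le_tsum
      intro k
      rw [← ENNReal.tsum_mul_left]
      calc w k * (A * (L (Q k)) ^ (2⁻¹:ℝ)) = A * (w k * (L (Q k)) ^ (2⁻¹:ℝ)) := by ring
        _ ≤ A * (w k * ∑' l, (L (T k l)) ^ (2⁻¹:ℝ)) := by
            apply mul_le_mul_right
            apply mul_le_mul_right
            rw [hQL k]
            exact sqrt_tsum_le _
        _ = ∑' l, A * (w k * (L (T k l)) ^ (2⁻¹:ℝ)) := by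
            rw [ENNReal.tsum_mul_left, ENNReal.tsum_mul_left]
    have step2 : ∑' k, ∑' l, w k * (L (T k l)) ^ (2⁻¹:ℝ)
        ≤ B * ∑' l, w l * ∑' k, (L (T k l)) ^ (2⁻¹:ℝ) := by
      calc ∑' k, ∑' l, w k * (L (T k l)) ^ (2⁻¹:ℝ)
          ≤ ∑' k, ∑' l, B * (w l * (L (T k l)) ^ (2⁻¹:ℝ)) := by
            apply ENNReal.tsum_le_tsum; intro k
            apply ENNReal.tsum_le_tsum; intro l
            rcases Set.eq_empty_or_nonempty (T k l) with he | hne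
            · have : L (T k l) = 0 := by simp [hL, he]
              rw [this]
              simp [ENNReal.zero_rpow_of_pos (by norm_num : (0:ℝ) < 2⁻¹)]
            · rw [← mul_assoc]
              exact mul_le_mul_left (hwle k l hne) _
        _ = ∑' l, ∑' k, B * (w l * (L (T k l)) ^ (2⁻¹:ℝ)) := ENNReal.tsum_comm
        _ = B * ∑' l, w l * ∑' k, (L (T k l)) ^ (2⁻¹:ℝ) := by
            rw [← ENNReal.tsum_mul_left]
            apply tsum_congr; intro l
            rw [ENNReal.tsum_mul_left, ENNReal.tsum_mul_left]
    have step3 : ∑' l, w l * ∑' k, (L (T k l)) ^ (2⁻¹:ℝ)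
        ≤ D * ∑' l, w l * (L (cube d l)) ^ (2⁻¹:ℝ) := by
      rw [← ENNReal.tsum_mul_left]
      apply ENNReal.tsum_le_tsum; intro l
      calc w l * ∑' k, (L (T k l)) ^ (2⁻¹:ℝ) ≤ w l * (D * (L (cube d l)) ^ (2⁻¹:ℝ)) :=
            mul_le_mul_right (hKl l) _
        _ = D * (w l * (L (cube d l)) ^ (2⁻¹:ℝ)) := by ring
    have efin : E21norm d s f = ∑' l, w l * (L (cube d l)) ^ (2⁻¹:ℝ) := by
      rw [E21norm]
      exact tsum_congr fun l => by rw [eLpNorm_two_eq]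
    calc ∑' k, w k * (A * (L (Q k)) ^ (2⁻¹:ℝ))
        ≤ A * ∑' k, ∑' l, w k * (L (T k l)) ^ (2⁻¹:ℝ) := step1
      _ ≤ A * (B * ∑' l, w l * ∑' k, (L (T k l)) ^ (2⁻¹:ℝ)) := mul_le_mul_right step2 _
      _ ≤ A * (B * (D * ∑' l, w l * (L (cube d l)) ^ (2⁻¹:ℝ))) := by
          apply mul_le_mul_right
          exact mul_le_mul_right step3 _
      _ = (A * B * D) * E21norm d s f := by rw [efin]; ring
  -- Step 6 : the constant
  have hconst : A * B * D ≤ ENNReal.ofReal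
      (((2 * 3^d : ℝ) ^ (2⁻¹:ℝ) * (2:ℝ) ^ (-s)) * (2:ℝ) ^ (s * (lam - 1))) := by
    have hA' : A = ENNReal.ofReal (((lam ^ d)⁻¹) ^ (2⁻¹:ℝ)) := by
      rw [hA, ENNReal.ofReal_rpow_of_pos (by positivity)]
    have hD' : D = ENNReal.ofReal ((2 * (3*lam)^d) ^ (2⁻¹:ℝ)) := by
      rw [hD, ENNReal.ofReal_rpow_of_pos (by positivity)]
    have hAD : A * D = ENNReal.ofReal ((2 * 3^d : ℝ) ^ (2⁻¹:ℝ)) := by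
      rw [hA', hD', ← ENNReal.ofReal_mul (by positivity)]
      congr 1
      rw [← Real.mul_rpow (by positivity) (by positivity)]
      congr 1
      rw [mul_pow]
      field_simp
    have hB' : B = ENNReal.ofReal ((2:ℝ) ^ (-s) * (2:ℝ) ^ (s * (lam - 1))) := by
      rw [hB]
      congr 1
      rw [← Real.rpow_add (by norm_num : (0:ℝ) < 2)]
      congr 1
      ring
    calc A * B * D = (A * D) * B := by ring
      _ = ENNReal.ofReal ((2 * 3^d : ℝ) ^ (2⁻¹:ℝ))
          * ENNReal.ofReal ((2:ℝ) ^ (-s) * (2:ℝ) ^ (s * (lam - 1))) := by rw [hAD, hB']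
      _ ≤ ENNReal.ofReal
          (((2 * 3^d : ℝ) ^ (2⁻¹:ℝ) * (2:ℝ) ^ (-s)) * (2:ℝ) ^ (s * (lam - 1))) := by
          rw [← ENNReal.ofReal_mul (by positivity)]
          apply le_of_eq
          congr 1
          ring
  exact le_trans main (mul_le_mul_left hconst _)
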